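/- arXiv:0712.2193 — 2 statements merged into one kernel-verified Lean document; each statement's English description precedes it below -/
import Mathlib

section
/- (Joint continuity lemma from the proof of Theorem 11.2.) Let X be a compact metric space and let V ⊆ 𝔻 be a set with the property that any two bounded harmonic functions on 𝔻 that agree on V are equal. Let M > 0 and let g̃ : 𝔻 × X → ℝ satisfy: 0 < g̃(p,x) ≤ M for all (p,x); for each x ∈ X the function p ↦ g̃(p,x) is harmonic on 𝔻; and for each v ∈ V the function x ↦ g̃(v,x) is continuous on X. Then g̃ is jointly continuous on 𝔻 × X. -/
open Metric Set Filter

noncomputable section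

/-- The open unit disc in `ℂ`. -/
def unitDisc : Set ℂ := Metric.ball 0 1

/-- A function `f : ℂ → ℝ` is harmonic on a set `U ⊆ ℂ` if, locally on `U`, it is
the real part of a holomorphic function (for open `U` this is equivalent to being
`C²` with vanishing Laplacian). -/
def HarmonicOnSet (f : ℂ → ℝ) (U : Set ℂ) : Prop :=
  ∀ z ∈ U, ∃ r > 0, Metric.ball z r ⊆ U ∧
    ∃ g : ℂ → ℂ, DifferentiableOn ℂ g (Metric.ball z r) ∧
      ∀ w ∈ Metric.ball z r, f w = (g w).re

/-- Two holomorphic functions on an open set with the same real part have the same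
derivative at every point of the set. -/
lemma deriv_eq_of_re_eq {G₁ G₂ : ℂ → ℂ} {N : Set ℂ} (hN : IsOpen N)
    (h₁ : DifferentiableOn ℂ G₁ N) (h₂ : DifferentiableOn ℂ G₂ N)
    (hre : ∀ w ∈ N, (G₁ w).re = (G₂ w).re) {w : ℂ} (hw : w ∈ N) :
    deriv G₁ w = deriv G₂ w := by
  have hd₁ : DifferentiableAt ℂ G₁ w := h₁.differentiableAt (hN.mem_nhds hw)
  have hd₂ : DifferentiableAt ℂ G₂ w := h₂.differentiableAt (hN.mem_nhds hw)
  set d : ℂ := deriv G₁ w - deriv G₂ w with hd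
  have hdφ : HasDerivAt (fun ζ => G₁ ζ - G₂ ζ) d w := hd₁.hasDerivAt.sub hd₂.hasDerivAt
  have key : ∀ v : ℂ, (d * v).re = 0 := by
    intro v
    have hc : HasDerivAt (fun ζ : ℂ => w + ζ * v) v 0 := by
      simpa using ((hasDerivAt_id (0:ℂ)).mul_const v).const_add w
    have h1 : HasDerivAt (fun ζ : ℂ => G₁ (w + ζ * v) - G₂ (w + ζ * v)) (d * v) 0 := by
      have := HasDerivAt.comp (0:ℂ) (by simpa using hdφ) hc
      exact this
    have h2 : HasDerivAt (fun t : ℝ => G₁ (w + t * v) - G₂ (w + t * v)) (d * v) 0 := by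
      exact_mod_cast h1.comp_ofReal
    have h3 : HasDerivAt (fun t : ℝ => (G₁ (w + t * v) - G₂ (w + t * v)).re) ((d * v).re) 0 :=
      (Complex.reCLM.hasFDerivAt.comp_hasDerivAt 0 h2 :)
    have hev : (fun t : ℝ => (G₁ (w + t * v) - G₂ (w + t * v)).re) =ᶠ[nhds (0:ℝ)]
        (fun _ => (0:ℝ)) := by
      have hop : IsOpen {t : ℝ | w + t * v ∈ N} :=
        (hN.preimage (by continuity))
      have h0 : (0:ℝ) ∈ {t : ℝ | w + t * v ∈ N} := by simp [hw]
      filter_upwards [hop.mem_nhds h0] with t ht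
      simp [Complex.sub_re, hre _ ht]
    have h4 : HasDerivAt (fun _ : ℝ => (0:ℝ)) ((d * v).re) 0 := by
      exact h3.congr_of_eventuallyEq hev.symm
    have h5 := (hasDerivAt_const (0:ℝ) (0:ℝ)).unique h4
    exact h5.symm
  have h1 := key 1
  have hI := key Complex.I
  have : d = 0 := by
    apply Complex.ext
    · simpa using h1
    · have h2 : (d * Complex.I).re = -d.im := by simp [Complex.mul_re]
      rw [h2] at hI
      simp only [Complex.zero_im]
      linarith
  have := sub_eq_zero.mp (hd ▸ this)
  exact this

/-- A holomorphic function on a disc has a primitive on any strictly smaller concentric disc. -/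
lemma exists_primitive_on_ball {f : ℂ → ℂ} {z : ℂ} {R r : ℝ}
    (hr : 0 < r) (hrR : r < R) (hf : DifferentiableOn ℂ f (Metric.ball z R)) :
    ∃ G : ℂ → ℂ, ∀ w ∈ Metric.ball z r, HasDerivAt G (f w) w := by
  set ρ : NNReal := Real.toNNReal ((r + R) / 2) with hρ
  have hρR : (ρ : ℝ) = (r + R) / 2 := Real.coe_toNNReal _ (by linarith)
  have hρpos : 0 < ρ := by
    rw [← NNReal.coe_lt_coe, hρR]; push_cast; linarith
  have hcb : Metric.closedBall z (ρ:ℝ) ⊆ Metric.ball z R := by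
    intro u hu
    rw [Metric.mem_closedBall] at hu
    rw [Metric.mem_ball]
    rw [hρR] at hu; linarith
  have hp : HasFPowerSeriesOnBall f (cauchyPowerSeries f z ρ) z ρ :=
    (hf.mono hcb).hasFPowerSeriesOnBall hρpos
  set p := cauchyPowerSeries f z ρ with hpdef
  set r' : NNReal := Real.toNNReal r with hr'
  have hr'r : (r' : ℝ) = r := Real.coe_toNNReal _ hr.le
  have hr'ρ : (r' : ENNReal) < (ρ : ENNReal) := by
    rw [ENNReal.coe_lt_coe, ← NNReal.coe_lt_coe, hr'r, hρR]; linarith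
  have hu : TendstoUniformlyOn (fun n y => p.partialSum n (y - z)) f atTop (Metric.ball z r) := by
    have := hp.tendstoUniformlyOn' hr'ρ
    rwa [show ((r':NNReal):ℝ) = r from hr'r] at this
  set P : ℕ → ℂ → ℂ := fun n w =>
    ∑ k ∈ Finset.range n, (((k:ℂ)+1)⁻¹ * (w - z)^(k+1)) * p.coeff k with hP
  set G : ℂ → ℂ := fun w => ∑' k : ℕ, (((k:ℂ)+1)⁻¹ * (w - z)^(k+1)) * p.coeff k with hG
  have hPd : ∀ n : ℕ, ∀ w : ℂ, HasDerivAt (P n) (p.partialSum n (w - z)) w := by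
    intro n w
    have hterm : ∀ k : ℕ, HasDerivAt (fun w => (((k:ℂ)+1)⁻¹ * (w - z)^(k+1)) * p.coeff k)
        ((w - z)^k * p.coeff k) w := by
      intro k
      have h1 : HasDerivAt (fun w : ℂ => (w - z)^(k+1)) (((k:ℕ)+1) * (w-z)^k) w := by
        have := ((hasDerivAt_id w).sub_const z).pow (k+1)
        simp at this; exact this
      have h2 := (h1.const_mul (((k:ℂ)+1)⁻¹)).mul_const (p.coeff k)
      refine h2.congr_deriv ?_
      have hk : ((k:ℂ)+1) ≠ 0 := Nat.cast_add_one_ne_zero k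
      rw [← mul_assoc (((k:ℂ)+1)⁻¹), inv_mul_cancel₀ hk, one_mul]
    have := HasDerivAt.fun_sum (fun k (_ : k ∈ Finset.range n) => hterm k)
    refine this.congr_deriv ?_
    unfold FormalMultilinearSeries.partialSum
    congr 1
    ext k
    rw [FormalMultilinearSeries.apply_eq_pow_smul_coeff, smul_eq_mul]
  have hPt : ∀ w ∈ Metric.ball z r, Tendsto (fun n => P n w) atTop (nhds (G w)) := by
    intro w hw
    rw [Metric.mem_ball] at hw
    have hwρ : w ∈ Metric.eball z (ρ : ENNReal) := by
      rw [Metric.mem_eball, edist_dist, ← ENNReal.ofReal_coe_nnreal]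
      refine (ENNReal.ofReal_lt_ofReal_iff (by rw [hρR]; linarith)).2 (by rw [hρR]; linarith)
    have hA : HasSum (fun k : ℕ => p k fun _ => w - z) (f w) := hp.hasSum_sub hwρ
    have hAs : Summable (fun k : ℕ => p k fun _ => w - z) := hA.summable
    have hAn : Summable (fun k : ℕ => ‖(p k fun _ => w - z)‖) := by
      rwa [summable_norm_iff]
    have hBs : Summable (fun k : ℕ => (((k:ℂ)+1)⁻¹ * (w - z)^(k+1)) * p.coeff k) := by
      apply Summable.of_norm_bounded (g := fun k => ‖w - z‖ * ‖(p k fun _ => w - z)‖)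
        (hAn.mul_left _)
      intro k
      rw [FormalMultilinearSeries.apply_eq_pow_smul_coeff, smul_eq_mul]
      have hk1 : ‖((k:ℂ)+1)⁻¹‖ ≤ 1 := by
        rw [norm_inv]
        rw [show ((k:ℂ)+1) = ((k+1 : ℕ) : ℂ) by push_cast; ring]
        rw [Complex.norm_natCast]
        have : (1:ℝ) ≤ (k+1 : ℕ) := by exact_mod_cast Nat.succ_le_succ (Nat.zero_le k)
        exact inv_le_one_of_one_le₀ this
      calc ‖(((k:ℂ)+1)⁻¹ * (w - z)^(k+1)) * p.coeff k‖
          = ‖((k:ℂ)+1)⁻¹‖ * (‖(w - z)^(k+1)‖ * ‖p.coeff k‖) := by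
            rw [norm_mul, norm_mul]; ring
        _ ≤ 1 * (‖(w - z)^(k+1)‖ * ‖p.coeff k‖) := by
            apply mul_le_mul_of_nonneg_right hk1 (by positivity)
        _ = ‖w - z‖ * ‖(w - z)^k * p.coeff k‖ := by
            rw [one_mul, pow_succ, norm_mul, norm_mul]; ring
    exact hBs.hasSum.tendsto_sum_nat
  refine ⟨G, fun w hw => ?_⟩
  exact hasDerivAt_of_tendstoUniformlyOn Metric.isOpen_ball hu
    (Filter.Eventually.of_forall (fun n w _ => hPd n w)) hPt hw

/-- Gluing the derivatives of local holomorphic representatives of a harmonic function. -/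
lemma exists_glued_deriv {h : ℂ → ℝ} (hh : HarmonicOnSet h unitDisc) :
    ∃ f : ℂ → ℂ, DifferentiableOn ℂ f unitDisc ∧
      ∀ (w : ℂ) (ρ : ℝ) (G : ℂ → ℂ), Metric.ball w ρ ⊆ unitDisc →
        DifferentiableOn ℂ G (Metric.ball w ρ) →
        (∀ u ∈ Metric.ball w ρ, h u = (G u).re) →
        ∀ u ∈ Metric.ball w ρ, f u = deriv G u := by
  choose! rad hrad hsub G hGd hGre using hh
  refine ⟨fun w => deriv (G w) w, ?_, ?_⟩
  case refine_2 =>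
    -- property (ii)
    intro w ρ Gloc hρsub hGlocd hGlocre u hu
    have huD : u ∈ unitDisc := hρsub hu
    have huu : u ∈ Metric.ball u (rad u) := Metric.mem_ball_self (hrad u huD)
    have hN : IsOpen (Metric.ball u (rad u) ∩ Metric.ball w ρ) :=
      Metric.isOpen_ball.inter Metric.isOpen_ball
    exact deriv_eq_of_re_eq hN
      ((hGd u huD).mono inter_subset_left) (hGlocd.mono inter_subset_right)
      (fun ζ hζ => by rw [← hGre u huD ζ hζ.1, ← hGlocre ζ hζ.2]) ⟨huu, hu⟩
  case refine_1 =>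
    intro w₀ hw₀
    have hball : Metric.ball w₀ (rad w₀) ⊆ unitDisc := hsub w₀ hw₀
    have hself : w₀ ∈ Metric.ball w₀ (rad w₀) := Metric.mem_ball_self (hrad w₀ hw₀)
    have heq : ∀ u ∈ Metric.ball w₀ (rad w₀), deriv (G u) u = deriv (G w₀) u := by
      intro u hu
      have huD : u ∈ unitDisc := hball hu
      have huu : u ∈ Metric.ball u (rad u) := Metric.mem_ball_self (hrad u huD)
      have hN : IsOpen (Metric.ball u (rad u) ∩ Metric.ball w₀ (rad w₀)) :=
        Metric.isOpen_ball.inter Metric.isOpen_ball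
      exact deriv_eq_of_re_eq hN
        ((hGd u huD).mono inter_subset_left) ((hGd w₀ hw₀).mono inter_subset_right)
        (fun ζ hζ => by rw [← hGre u huD ζ hζ.1, ← hGre w₀ hw₀ ζ hζ.2]) ⟨huu, hu⟩
    have han : AnalyticOnNhd ℂ (deriv (G w₀)) (Metric.ball w₀ (rad w₀)) :=
      ((hGd w₀ hw₀).analyticOnNhd Metric.isOpen_ball).deriv
    have hda : DifferentiableAt ℂ (fun w => deriv (G w) w) w₀ := by
      have hev : (fun w => deriv (G w) w) =ᶠ[nhds w₀] deriv (G w₀) := by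
        filter_upwards [Metric.isOpen_ball.mem_nhds hself] with u hu
        exact heq u hu
      exact ((han w₀ hself).differentiableAt).congr_of_eventuallyEq hev
    exact hda.differentiableWithinAt

/-- A harmonic function on the unit disc is the real part of a holomorphic function on any
disc whose quadruple is contained in the unit disc. -/
lemma exists_conjugate {h : ℂ → ℝ} (hh : HarmonicOnSet h unitDisc) {z : ℂ} {s : ℝ}
    (hs : 0 < s) (hsub : Metric.ball z (4*s) ⊆ unitDisc) :
    ∃ G : ℂ → ℂ, DifferentiableOn ℂ G (Metric.ball z (3*s)) ∧
      ∀ w ∈ Metric.ball z (3*s), h w = (G w).re := by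
  obtain ⟨f, hfd, hfglue⟩ := exists_glued_deriv hh
  obtain ⟨G₀, hG₀⟩ := exists_primitive_on_ball (by linarith) (by linarith : 3*s < 4*s)
    (hfd.mono hsub)
  have h3sub : Metric.ball z (3*s) ⊆ unitDisc :=
    (Metric.ball_subset_ball (by linarith)).trans hsub
  -- h - Re G₀ has zero derivative
  have hkey : ∀ w₀ ∈ Metric.ball z (3*s), ∀ᶠ w in nhds w₀,
      h w - (G₀ w).re = h w₀ - (G₀ w₀).re := by
    intro w₀ hw₀
    obtain ⟨ρ, hρ, hρsub, Gloc, hGlocd, hGlocre⟩ := hh w₀ (h3sub hw₀)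
    set N := Metric.ball w₀ ρ ∩ Metric.ball z (3*s) with hN
    have hNopen : IsOpen N := Metric.isOpen_ball.inter Metric.isOpen_ball
    have hNmem : w₀ ∈ N := ⟨Metric.mem_ball_self hρ, hw₀⟩
    have hNconv : Convex ℝ N := (convex_ball _ _).inter (convex_ball _ _)
    have hconst : ∀ w ∈ N, G₀ w - Gloc w = G₀ w₀ - Gloc w₀ := by
      intro w hw
      have hd : ∀ u ∈ N, HasDerivWithinAt (fun w => G₀ w - Gloc w) 0 N u := by
        intro u hu
        have h1 : HasDerivAt G₀ (f u) u := hG₀ u hu.2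
        have h2 : HasDerivAt Gloc (deriv Gloc u) u :=
          (hGlocd.differentiableAt (Metric.isOpen_ball.mem_nhds hu.1)).hasDerivAt
        have h3 : f u = deriv Gloc u := hfglue w₀ ρ Gloc hρsub hGlocd hGlocre u hu.1
        have := (h1.sub h2)
        rw [h3] at this
        simp at this; exact this.hasDerivWithinAt
      have hle := Convex.norm_image_sub_le_of_norm_hasDerivWithin_le (C := 0) hd
        (fun u _ => norm_zero.le) hNconv hNmem hw
      have h0 : ‖(G₀ w - Gloc w) - (G₀ w₀ - Gloc w₀)‖ ≤ 0 := by simpa using hle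
      exact sub_eq_zero.mp (norm_le_zero_iff.mp h0)
    filter_upwards [hNopen.mem_nhds hNmem] with w hw
    have h1 : h w = (Gloc w).re := hGlocre w (mem_of_mem_inter_left hw)
    have h2 : h w₀ = (Gloc w₀).re := hGlocre w₀ (Metric.mem_ball_self hρ)
    have h3 := congrArg Complex.re (hconst w hw)
    rw [h1, h2]
    simp only [Complex.sub_re] at h3
    linarith
  -- locally constant implies constant on the convex ball
  have hfd0 : ∀ w ∈ Metric.ball z (3*s),
      HasFDerivWithinAt (fun w => h w - (G₀ w).re) (0 : ℂ →L[ℝ] ℝ)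
        (Metric.ball z (3*s)) w := by
    intro w hw
    have : HasFDerivAt (fun w => h w - (G₀ w).re) (0 : ℂ →L[ℝ] ℝ) w := by
      have hc : HasFDerivAt (fun _ : ℂ => h w - (G₀ w).re) (0 : ℂ →L[ℝ] ℝ) w :=
        hasFDerivAt_const _ _
      exact hc.congr_of_eventuallyEq ((hkey w hw).mono fun u hu => hu)
    exact this.hasFDerivWithinAt
  have hconst : ∀ w ∈ Metric.ball z (3*s),
      h w - (G₀ w).re = h z - (G₀ z).re := by
    intro w hw
    have hzmem : z ∈ Metric.ball z (3*s) := Metric.mem_ball_self (by linarith)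
    have hle := Convex.norm_image_sub_le_of_norm_hasFDerivWithin_le (C := 0) hfd0
      (fun u _ => norm_zero.le) (convex_ball _ _) hzmem hw
    have h0 : |(h w - (G₀ w).re) - (h z - (G₀ z).re)| ≤ 0 := by
      simpa [Real.norm_eq_abs] using hle
    have h1 : (h w - (G₀ w).re) - (h z - (G₀ z).re) = 0 := abs_nonpos_iff.mp h0
    linarith
  refine ⟨fun w => G₀ w + Complex.ofReal (h z - (G₀ z).re), ?_, ?_⟩
  · intro w hw
    exact ((hG₀ w hw).differentiableAt.add_const _).differentiableWithinAt
  · intro w hw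
    have := hconst w hw
    simp only [Complex.add_re, Complex.ofReal_re]
    linarith

/-- Key estimate: a harmonic function with values in `(0, M]` has, near each point, a
holomorphic representative which is uniformly bounded and uniformly Lipschitz. -/
lemma master_estimate {h : ℂ → ℝ} {M : ℝ} (hh : HarmonicOnSet h unitDisc)
    (hb : ∀ w ∈ unitDisc, 0 < h w ∧ h w ≤ M) {z : ℂ} {s : ℝ} (hs : 0 < s)
    (hsub : Metric.ball z (4*s) ⊆ unitDisc) :
    ∃ G : ℂ → ℂ, DifferentiableOn ℂ G (Metric.ball z s) ∧
      (∀ w ∈ Metric.ball z s, h w = (G w).re) ∧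
      (∀ w ∈ Metric.ball z s, ‖G w‖ ≤ M + Real.exp M) ∧
      (∀ p ∈ Metric.ball z s, ∀ q ∈ Metric.ball z s,
        ‖G p - G q‖ ≤ (Real.exp M / s) * dist p q) := by
  obtain ⟨G₁, hG₁d, hG₁re⟩ := exists_conjugate hh hs hsub
  set G : ℂ → ℂ := fun w => G₁ w - Complex.I * ((G₁ z).im : ℂ) with hGdef
  have h3sub : Metric.ball z (3*s) ⊆ unitDisc :=
    (Metric.ball_subset_ball (by linarith)).trans hsub
  have hssub : Metric.ball z s ⊆ Metric.ball z (3*s) := Metric.ball_subset_ball (by linarith)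
  have hGd : DifferentiableOn ℂ G (Metric.ball z (3*s)) := by
    exact hG₁d.sub_const _
  have hGre : ∀ w ∈ Metric.ball z (3*s), h w = (G w).re := by
    intro w hw
    rw [hG₁re w hw, hGdef]
    simp [Complex.sub_re, Complex.mul_re]
  set F : ℂ → ℂ := fun w => Complex.exp (-G w) with hF
  have hFd : DifferentiableOn ℂ F (Metric.ball z (3*s)) := hGd.neg.cexp
  have hFnorm : ∀ w ∈ Metric.ball z (3*s), ‖F w‖ = Real.exp (-(h w)) := by
    intro w hw
    rw [hF]
    simp only [Complex.norm_exp, Complex.neg_re]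
    rw [← hGre w hw]
  have hFlt : ∀ w ∈ Metric.ball z (3*s), ‖F w‖ < 1 := by
    intro w hw
    rw [hFnorm w hw]
    have := (hb w (h3sub hw)).1
    exact Real.exp_lt_one_iff.mpr (by linarith)
  have hderiv : ∀ w ∈ Metric.ball z s, ‖deriv G w‖ ≤ Real.exp M / s := by
    intro w hw
    have hw3 : w ∈ Metric.ball z (3*s) := hssub hw
    have hGder : HasDerivAt G (deriv G w) w :=
      (hGd.differentiableAt (Metric.isOpen_ball.mem_nhds hw3)).hasDerivAt
    have hFder : HasDerivAt F (Complex.exp (-G w) * (-(deriv G w))) w := hGder.neg.cexp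
    have hball2 : Metric.ball w (2*s) ⊆ Metric.ball z (3*s) := by
      intro u hu
      rw [Metric.mem_ball] at hu ⊢
      have hwz : dist w z < s := Metric.mem_ball.mp hw
      calc dist u z ≤ dist u w + dist w z := dist_triangle _ _ _
        _ < 2*s + s := by linarith
        _ = 3*s := by ring
    have hmaps : Set.MapsTo F (Metric.ball w (2*s)) (Metric.ball (F w) 2) := by
      intro u hu
      rw [Metric.mem_ball]
      calc dist (F u) (F w) ≤ ‖F u‖ + ‖F w‖ := by
            rw [dist_eq_norm]; exact norm_sub_le _ _
        _ < 1 + 1 := add_lt_add (hFlt u (hball2 hu)) (hFlt w hw3)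
        _ = 2 := by norm_num
    have hSch : ‖deriv F w‖ ≤ 2 / (2*s) :=
      Complex.norm_deriv_le_div_of_mapsTo_ball (hFd.mono hball2) (hmaps.mono_right Metric.ball_subset_closedBall) (by linarith)
    have hFeq : deriv F w = Complex.exp (-G w) * (-(deriv G w)) := hFder.deriv
    have hnorm : ‖deriv F w‖ = Real.exp (-(h w)) * ‖deriv G w‖ := by
      rw [hFeq, norm_mul, norm_neg]
      congr 1
      exact hFnorm w hw3
    have hGw : ‖deriv G w‖ = Real.exp (h w) * ‖deriv F w‖ := by
      rw [hnorm, ← mul_assoc, ← Real.exp_add]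
      simp
    rw [hGw]
    have h1 : Real.exp (h w) ≤ Real.exp M := Real.exp_le_exp.mpr (hb w (h3sub hw3)).2
    calc Real.exp (h w) * ‖deriv F w‖ ≤ Real.exp M * (2/(2*s)) :=
          mul_le_mul h1 hSch (norm_nonneg _) (Real.exp_nonneg _)
      _ = Real.exp M / s := by field_simp
  have hlip : ∀ p ∈ Metric.ball z s, ∀ q ∈ Metric.ball z s,
      ‖G p - G q‖ ≤ (Real.exp M / s) * dist p q := by
    intro p hp q hq
    have hf : ∀ u ∈ Metric.ball z s, HasDerivWithinAt G (deriv G u) (Metric.ball z s) u :=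
      fun u hu => ((hGd.differentiableAt
        (Metric.isOpen_ball.mem_nhds (hssub hu))).hasDerivAt).hasDerivWithinAt
    have := Convex.norm_image_sub_le_of_norm_hasDerivWithin_le hf hderiv
      (convex_ball _ _) hq hp
    rwa [dist_eq_norm]
  have hGz : ‖G z‖ ≤ M := by
    have hz3 : z ∈ Metric.ball z (3*s) := Metric.mem_ball_self (by linarith)
    have him : (G z).im = 0 := by
      rw [hGdef]
      simp [Complex.sub_im, Complex.mul_im]
    have hre : (G z).re = h z := (hGre z hz3).symm
    calc ‖G z‖ ≤ |(G z).re| + |(G z).im| := Complex.norm_le_abs_re_add_abs_im _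
      _ = |h z| := by rw [him, hre]; simp
      _ ≤ M := by
          have := hb z (h3sub hz3)
          rw [abs_of_pos this.1]; exact this.2
  refine ⟨G, hGd.mono hssub, fun w hw => hGre w (hssub hw), ?_, hlip⟩
  intro w hw
  have hzs : z ∈ Metric.ball z s := Metric.mem_ball_self hs
  calc ‖G w‖ = ‖G z + (G w - G z)‖ := by ring_nf
    _ ≤ ‖G z‖ + ‖G w - G z‖ := norm_add_le _ _
    _ ≤ M + (Real.exp M / s) * dist w z := by
        have := hlip w hw z hzs
        exact add_le_add hGz this
    _ ≤ M + Real.exp M := by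
        have hd : dist w z ≤ s := le_of_lt (Metric.mem_ball.mp hw)
        have : (Real.exp M / s) * dist w z ≤ (Real.exp M / s) * s :=
          mul_le_mul_of_nonneg_left hd (by positivity)
        have heq : (Real.exp M / s) * s = Real.exp M := by field_simp
        linarith

/-- `H` is a bounded harmonic function on the open unit disc. -/
def IsBoundedHarmonic (H : ℂ → ℝ) : Prop :=
  HarmonicOnSet H unitDisc ∧ ∃ M : ℝ, ∀ z ∈ unitDisc, |H z| ≤ M

/-- **Joint continuity lemma (from the proof of Theorem 11.2).** Let `X` be a compact
metric space and `V ⊆ 𝔻` a uniqueness set for bounded harmonic functions. If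
`g : 𝔻 × X → ℝ` is positive and bounded, harmonic in the disc variable for each `x`, and
continuous in `x` at each point of `V`, then `g` is jointly continuous on `𝔻 × X`. -/
theorem joint_continuity_of_separately_regular
    {X : Type*} [MetricSpace X] [CompactSpace X]
    (V : Set ℂ) (hV : V ⊆ unitDisc)
    (huniq : ∀ H₁ H₂ : ℂ → ℝ, IsBoundedHarmonic H₁ → IsBoundedHarmonic H₂ →
      (∀ v ∈ V, H₁ v = H₂ v) → ∀ z ∈ unitDisc, H₁ z = H₂ z)
    (M : ℝ) (hM : 0 < M) (g : ℂ → X → ℝ)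
    (hg_pos : ∀ p ∈ unitDisc, ∀ x : X, 0 < g p x ∧ g p x ≤ M)
    (hg_harm : ∀ x : X, HarmonicOnSet (fun p => g p x) unitDisc)
    (hg_cont : ∀ v ∈ V, Continuous (fun x : X => g v x)) :
    ContinuousOn (fun p : ℂ × X => g p.1 p.2) (unitDisc ×ˢ (univ : Set X)) := by
  have hrad : ∀ z ∈ unitDisc, ∃ s : ℝ, 0 < s ∧ Metric.ball z (4*s) ⊆ unitDisc := by
    intro z hz
    have hz1 : ‖z‖ < 1 := mem_ball_zero_iff.mp hz
    have hz0 : 0 ≤ ‖z‖ := norm_nonneg _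
    refine ⟨(1 - ‖z‖)/5, by linarith, ?_⟩
    intro u hu
    rw [Metric.mem_ball, dist_eq_norm] at hu
    rw [unitDisc, mem_ball_zero_iff]
    calc ‖u‖ ≤ ‖u - z‖ + ‖z‖ := by
          simpa using norm_add_le (u - z) z
      _ < 4*((1 - ‖z‖)/5) + ‖z‖ := by linarith
      _ ≤ 1 := by linarith
  -- Step 1 : for each p₀ in the disc, continuity in the second variable
  have step1 : ∀ p₀ ∈ unitDisc, Continuous fun x => g p₀ x := by
    intro p₀ hp₀
    rw [continuous_iff_continuousAt]
    intro x₀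
    rw [ContinuousAt, tendsto_iff_ultrafilter]
    intro 𝒰 h𝒰
    have hlim : ∀ p, p ∈ unitDisc → ∃ a, a ∈ Set.Icc (0:ℝ) M ∧
        Tendsto (fun x => g p x) (𝒰 : Filter X) (nhds a) := by
      intro p hp
      have hmem : Set.Icc (0:ℝ) M ∈ Ultrafilter.map (fun x => g p x) 𝒰 := by
        have hall : ∀ x, g p x ∈ Set.Icc (0:ℝ) M :=
          fun x => ⟨(hg_pos p hp x).1.le, (hg_pos p hp x).2⟩
        exact Filter.mem_map.2 (Filter.univ_mem' hall)
      obtain ⟨a, ha, hle⟩ := isCompact_Icc.ultrafilter_le_nhds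
        (Ultrafilter.map (fun x => g p x) 𝒰) (le_principal_iff.mpr hmem)
      exact ⟨a, ha, hle⟩
    choose! F hFmem hFt using hlim
    have hFharm : HarmonicOnSet F unitDisc := by
      intro z hz
      obtain ⟨s, hs, hsub4⟩ := hrad z hz
      have hssub : Metric.ball z s ⊆ unitDisc :=
        (Metric.ball_subset_ball (by linarith)).trans hsub4
      have hmx : ∀ x : X, ∃ G : ℂ → ℂ, DifferentiableOn ℂ G (Metric.ball z s) ∧
          (∀ w ∈ Metric.ball z s, g w x = (G w).re) ∧
          (∀ w ∈ Metric.ball z s, ‖G w‖ ≤ M + Real.exp M) ∧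
          (∀ p ∈ Metric.ball z s, ∀ q ∈ Metric.ball z s,
            ‖G p - G q‖ ≤ (Real.exp M / s) * dist p q) :=
        fun x => master_estimate (hg_harm x) (fun w hw => hg_pos w hw x) hs hsub4
      choose Gx hGxd hGxre hGxb hGxl using hmx
      set C := M + Real.exp M with hC
      set L := Real.exp M / s with hL
      have hL0 : 0 ≤ L := by positivity
      have hφlim : ∀ w, w ∈ Metric.ball z s → ∃ a : ℂ, a ∈ Metric.closedBall (0:ℂ) C ∧
          Tendsto (fun x => Gx x w) (𝒰 : Filter X) (nhds a) := by
        intro w hw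
        have hmem : Metric.closedBall (0:ℂ) C ∈ Ultrafilter.map (fun x => Gx x w) 𝒰 := by
          have hall : ∀ x, Gx x w ∈ Metric.closedBall (0:ℂ) C :=
            fun x => mem_closedBall_zero_iff.mpr (hGxb x w hw)
          exact Filter.mem_map.2 (Filter.univ_mem' hall)
        obtain ⟨a, ha, hle⟩ := (isCompact_closedBall (0:ℂ) C).ultrafilter_le_nhds
          (Ultrafilter.map (fun x => Gx x w) 𝒰) (le_principal_iff.mpr hmem)
        exact ⟨a, ha, hle⟩
      choose! φ hφmem hφt using hφlim
      have hφlip : ∀ p ∈ Metric.ball z s, ∀ q ∈ Metric.ball z s,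
          dist (φ p) (φ q) ≤ L * dist p q := by
        intro p hp q hq
        have ht : Tendsto (fun x => dist (Gx x p) (Gx x q)) (𝒰 : Filter X)
            (nhds (dist (φ p) (φ q))) := (hφt p hp).dist (hφt q hq)
        exact le_of_tendsto ht (Filter.Eventually.of_forall fun x => by
          rw [dist_eq_norm]; exact hGxl x p hp q hq)
      have hTLU : TendstoLocallyUniformlyOn (fun x w => Gx x w) φ (𝒰 : Filter X)
          (Metric.ball z s) := by
        rw [Metric.tendstoLocallyUniformlyOn_iff]
        intro ε hε w hw
        set δ := min (ε / (4*(L+1))) 1 with hδ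
        have hδ0 : 0 < δ := lt_min (by positivity) one_pos
        have hδle : δ ≤ ε / (4*(L+1)) := min_le_left _ _
        have hLδ : L * δ ≤ ε/4 := by
          calc L * δ ≤ (L+1) * (ε / (4*(L+1))) :=
                mul_le_mul (by linarith) hδle hδ0.le (by linarith)
            _ = ε/4 := by field_simp
        refine ⟨Metric.ball z s ∩ Metric.ball w δ,
          inter_mem_nhdsWithin _ (Metric.ball_mem_nhds _ hδ0), ?_⟩
        have hev : ∀ᶠ x in (𝒰 : Filter X), dist (Gx x w) (φ w) < ε/4 :=
          Metric.tendsto_nhds.mp (hφt w hw) (ε/4) (by positivity)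
        filter_upwards [hev] with x hx u hu
        have huz : u ∈ Metric.ball z s := hu.1
        have huw : dist u w < δ := Metric.mem_ball.mp hu.2
        calc dist (φ u) (Gx x u)
            ≤ dist (φ u) (φ w) + dist (φ w) (Gx x w) + dist (Gx x w) (Gx x u) :=
              dist_triangle4 _ _ _ _
          _ ≤ L * dist u w + dist (φ w) (Gx x w) + L * dist w u := by
              gcongr
              · exact hφlip u huz w hw
              · rw [dist_comm (Gx x w) (Gx x u), dist_eq_norm, dist_comm w u]
                exact hGxl x u huz w hw
          _ < L * δ + ε/4 + L * δ := by
              rw [dist_comm (φ w)]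
              have h1 : L * dist u w ≤ L * δ := mul_le_mul_of_nonneg_left huw.le hL0
              have h2 : L * dist w u ≤ L * δ := by
                rw [dist_comm]; exact mul_le_mul_of_nonneg_left huw.le hL0
              linarith
          _ ≤ ε/4 + ε/4 + ε/4 := by linarith
          _ < ε := by linarith
      have hφd : DifferentiableOn ℂ φ (Metric.ball z s) :=
        hTLU.differentiableOn (Filter.Eventually.of_forall fun x => hGxd x)
          Metric.isOpen_ball
      refine ⟨s, hs, hssub, φ, hφd, ?_⟩
      intro w hw
      have h1 : Tendsto (fun x => (Gx x w).re) (𝒰 : Filter X) (nhds (φ w).re) :=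
        (Complex.continuous_re.tendsto _).comp (hφt w hw)
      have h3 : (fun x => (Gx x w).re) = fun x => g w x :=
        funext fun x => (hGxre x w hw).symm
      rw [h3] at h1
      exact tendsto_nhds_unique (hFt w (hssub hw)) h1
    have hFb : IsBoundedHarmonic F := by
      refine ⟨hFharm, M, fun w hw => ?_⟩
      have := hFmem w hw
      rw [abs_le]
      exact ⟨by linarith [this.1], this.2⟩
    have hgb : IsBoundedHarmonic (fun p => g p x₀) := by
      refine ⟨hg_harm x₀, M, fun w hw => ?_⟩
      have := hg_pos w hw x₀
      rw [abs_le]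
      exact ⟨by linarith [this.1], this.2⟩
    have hagree : ∀ v ∈ V, F v = g v x₀ := by
      intro v hv
      have h1 : Tendsto (fun x => g v x) (𝒰 : Filter X) (nhds (g v x₀)) :=
        ((hg_cont v hv).tendsto x₀).mono_left h𝒰
      exact tendsto_nhds_unique (hFt v (hV hv)) h1
    have hend := huniq F (fun p => g p x₀) hFb hgb hagree p₀ hp₀
    have := hFt p₀ hp₀
    rwa [hend] at this
  -- Step 2 : joint continuity
  rintro ⟨p₀, x₀⟩ ⟨hp₀, -⟩
  obtain ⟨s, hs, hsub4⟩ := hrad p₀ hp₀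
  set L := Real.exp M / s with hL
  have hL0 : 0 ≤ L := by positivity
  have hlip : ∀ (x : X), ∀ p ∈ Metric.ball p₀ s, |g p x - g p₀ x| ≤ L * dist p p₀ := by
    intro x p hp
    obtain ⟨G, hGd, hGre, hGb, hGl⟩ := master_estimate (hg_harm x)
      (fun w hw => hg_pos w hw x) hs hsub4
    have hp₀m : p₀ ∈ Metric.ball p₀ s := Metric.mem_ball_self hs
    have hle := hGl p hp p₀ hp₀m
    rw [hGre p hp, hGre p₀ hp₀m]
    calc |(G p).re - (G p₀).re| = |(G p - G p₀).re| := by rw [Complex.sub_re]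
      _ ≤ ‖G p - G p₀‖ := Complex.abs_re_le_norm _
      _ ≤ L * dist p p₀ := hle
  rw [Metric.continuousWithinAt_iff]
  intro ε hε
  have hc : ContinuousAt (fun x => g p₀ x) x₀ := (step1 p₀ hp₀).continuousAt
  obtain ⟨δ₂, hδ₂, hc2⟩ := Metric.continuousAt_iff.mp hc (ε/2) (by positivity)
  refine ⟨min (min s δ₂) ((ε/2) / (L+1)), by positivity, ?_⟩
  rintro ⟨p, x⟩ ⟨hpD, -⟩ hdist
  rw [Prod.dist_eq] at hdist
  have hd1 : dist p p₀ < min (min s δ₂) ((ε/2)/(L+1)) :=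
    lt_of_le_of_lt (le_max_left _ _) hdist
  have hd2 : dist x x₀ < min (min s δ₂) ((ε/2)/(L+1)) :=
    lt_of_le_of_lt (le_max_right _ _) hdist
  have hps : p ∈ Metric.ball p₀ s := by
    rw [Metric.mem_ball]
    exact hd1.trans_le ((min_le_left _ _).trans (min_le_left _ _))
  have hx2 : dist x x₀ < δ₂ := hd2.trans_le ((min_le_left _ _).trans (min_le_right _ _))
  have h1 : |g p x - g p₀ x| ≤ L * dist p p₀ := hlip x p hps
  have h2 : dist (g p₀ x) (g p₀ x₀) < ε/2 := hc2 hx2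
  rw [Real.dist_eq] at h2
  have h3 : L * dist p p₀ ≤ ε/2 := by
    have hd3 : dist p p₀ ≤ (ε/2)/(L+1) := (hd1.trans_le (min_le_right _ _)).le
    calc L * dist p p₀ ≤ (L+1) * ((ε/2)/(L+1)) :=
          mul_le_mul (by linarith) hd3 dist_nonneg (by linarith)
      _ = ε/2 := by field_simp
  show dist (g p x) (g p₀ x₀) < ε
  rw [Real.dist_eq]
  calc |g p x - g p₀ x₀| ≤ |g p x - g p₀ x| + |g p₀ x - g p₀ x₀| := abs_sub_le _ _ _
    _ < ε := by linarith
end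
end

section
/- (Lemma 8.1: Lipschitz continuity of the holonomy of a harmonic straightening.) For every pair of points z₀, z₁ ∈ 𝔻 there exists a constant C > 0 with the following property. Let Φ : 𝔻 × [0,1] → [0,1] be any function such that: (i) for each t ∈ [0,1], the map z ↦ Φ(z,t) is harmonic on 𝔻; (ii) for all s ≤ t in [0,1] and all z ∈ 𝔻, Φ(z,s) ≤ Φ(z,t); and (iii) Φ(z₀,t) = t for all t ∈ [0,1]. Then the holonomy function t ↦ Φ(z₁,t) is Lipschitz with constant C: |Φ(z₁,t) − Φ(z₁,s)| ≤ C|t − s| for all s,t ∈ [0,1]. -/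
set_option maxHeartbeats 1000000

open Metric Set Filter

noncomputable section

section Auxiliary

open Complex intervalIntegral

/-- If a holomorphic function has eventually vanishing real part, its derivative vanishes. -/
lemma deriv_eq_zero_of_re_eventually_zero {q : ℂ → ℂ} {w : ℂ} (hq : DifferentiableAt ℂ q w)
    (h : (fun x => (q x).re) =ᶠ[nhds w] fun _ => (0 : ℝ)) : deriv q w = 0 := by
  set d := deriv q w with hd
  have h1 : HasFDerivAt q ((1 : ℂ →L[ℂ] ℂ).smulRight d) w := hq.hasDerivAt.hasFDerivAt
  have h2 : HasFDerivAt (fun x => (q x).re)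
      (Complex.reCLM.comp (((1 : ℂ →L[ℂ] ℂ).smulRight d).restrictScalars ℝ)) w :=
    Complex.reCLM.hasFDerivAt.comp w (h1.restrictScalars ℝ)
  have h3 : HasFDerivAt (fun _ : ℂ => (0 : ℝ))
      (Complex.reCLM.comp (((1 : ℂ →L[ℂ] ℂ).smulRight d).restrictScalars ℝ)) w :=
    h2.congr_of_eventuallyEq h.symm
  have h4 : (Complex.reCLM.comp (((1 : ℂ →L[ℂ] ℂ).smulRight d).restrictScalars ℝ))
      = (0 : ℂ →L[ℝ] ℝ) := h3.unique (hasFDerivAt_const 0 w)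
  have e1 : d.re = 0 := by
    have := congrFun (congrArg DFunLike.coe h4) (1 : ℂ)
    simpa using this
  have e2 : -d.im = 0 := by
    have := congrFun (congrArg DFunLike.coe h4) (I : ℂ)
    simpa [Complex.mul_re] using this
  exact Complex.ext e1 (by simpa using e2)


lemma uIcc_abs_sub {a b x : ℝ} (h : x ∈ uIcc a b) : |x - a| ≤ |b - a| := by
  rcases Set.mem_uIcc.1 h with ⟨h1, h2⟩ | ⟨h1, h2⟩ <;> rw [abs_le] <;>
    constructor <;> cases abs_cases (b - a) <;> linarith

lemma rect_mem_ball {c z : ℂ} {R : ℝ} (hz : z ∈ ball c R) {x y : ℝ}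
    (hx : x ∈ uIcc c.re z.re) (hy : y ∈ uIcc c.im z.im) : (x : ℂ) + y * I ∈ ball c R := by
  rw [mem_ball, Complex.dist_eq_re_im] at hz ⊢
  simp only [Complex.add_re, Complex.ofReal_re, Complex.mul_re, Complex.I_re, Complex.I_im,
    Complex.ofReal_im, Complex.add_im, Complex.mul_im] at *
  have hx' : |x - c.re| ≤ |z.re - c.re| := uIcc_abs_sub hx
  have hy' : |y - c.im| ≤ |z.im - c.im| := uIcc_abs_sub hy
  refine lt_of_le_of_lt (Real.sqrt_le_sqrt ?_) hz
  nlinarith [_root_.sq_abs (x - c.re), _root_.sq_abs (z.re - c.re), _root_.sq_abs (y - c.im),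
    _root_.sq_abs (z.im - c.im),
    pow_le_pow_left₀ (abs_nonneg (x - c.re)) hx' 2, pow_le_pow_left₀ (abs_nonneg (y - c.im)) hy' 2]

lemma exists_primitive {f : ℂ → ℂ} {c : ℂ} {R : ℝ}
    (hf : DifferentiableOn ℂ f (ball c R)) :
    ∃ F : ℂ → ℂ, ∀ z ∈ ball c R, HasDerivAt F (f z) z := by
  have hcont : ContinuousOn f (ball c R) := hf.continuousOn
  set A : ℝ → ℝ → ℝ → ℂ := fun a b y => ∫ x : ℝ in a..b, f ((x : ℂ) + y * I) with hAdef
  set B : ℝ → ℝ → ℝ → ℂ := fun x a b => ∫ y : ℝ in a..b, f ((x : ℂ) + y * I) with hBdef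
  set F : ℂ → ℂ := fun z => A c.re z.re c.im + I * B z.re c.im z.im with hFdef
  refine ⟨F, ?_⟩
  intro z hz
  -- integrability helpers
  have hIA : ∀ (a b y : ℝ), (∀ x ∈ uIcc a b, (x : ℂ) + y * I ∈ ball c R) →
      IntervalIntegrable (fun x : ℝ => f ((x : ℂ) + y * I)) MeasureTheory.volume a b := by
    intro a b y hmaps
    apply ContinuousOn.intervalIntegrable
    exact hcont.comp (Continuous.continuousOn
      (Complex.continuous_ofReal.add continuous_const)) hmaps
  have hIB : ∀ (x a b : ℝ), (∀ y ∈ uIcc a b, (x : ℂ) + y * I ∈ ball c R) →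
      IntervalIntegrable (fun y : ℝ => f ((x : ℂ) + y * I)) MeasureTheory.volume a b := by
    intro x a b hmaps
    apply ContinuousOn.intervalIntegrable
    exact hcont.comp (Continuous.continuousOn
      (continuous_const.add (Complex.continuous_ofReal.mul continuous_const))) hmaps
  -- the compact segment from (z.re, c.im) to z
  set K : Set ℂ := (fun y : ℝ => (z.re : ℂ) + y * I) '' (uIcc c.im z.im) with hK
  have hKc : IsCompact K := isCompact_uIcc.image (continuous_const.add (Complex.continuous_ofReal.mul continuous_const))
  have hKsub : K ⊆ ball c R := by
    rintro - ⟨y, hy, rfl⟩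
    exact rect_mem_ball hz right_mem_uIcc hy
  obtain ⟨δ₀, hδ₀, hthick⟩ := hKc.exists_thickening_subset_open isOpen_ball hKsub
  have hzR : dist z c < R := mem_ball.1 hz
  set δ : ℝ := min (δ₀ / 2) (R - dist z c) with hδdef
  have hδpos : 0 < δ := lt_min (by linarith) (by linarith)
  -- membership helper
  have hmem : ∀ w ∈ ball z δ, ∀ x y y' : ℝ, |x - z.re| ≤ dist w z → |y - y'| ≤ dist w z →
      y' ∈ uIcc c.im z.im → (x : ℂ) + y * I ∈ ball c R := by
    intro w hw x y y' hx hy hy'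
    apply hthick
    rw [mem_thickening_iff]
    refine ⟨(z.re : ℂ) + y' * I, ⟨y', hy', rfl⟩, ?_⟩
    have hd : dist ((x : ℂ) + y * I) ((z.re : ℂ) + y' * I) ≤ |x - z.re| + |y - y'| := by
      rw [Complex.dist_eq]
      refine le_trans (Complex.norm_le_abs_re_add_abs_im _) (le_of_eq ?_)
      congr 1 <;> simp
    have hwz : dist w z < δ := mem_ball.1 hw
    have hδ1 : δ ≤ δ₀ / 2 := min_le_left _ _
    calc dist ((x : ℂ) + y * I) ((z.re : ℂ) + y' * I) ≤ |x - z.re| + |y - y'| := hd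
      _ ≤ dist w z + dist w z := add_le_add hx hy
      _ < δ + δ := by linarith
      _ ≤ δ₀ := by linarith
  have hball : ball z δ ⊆ ball c R := by
    intro w hw
    rw [mem_ball] at hw ⊢
    calc dist w c ≤ dist w z + dist z c := dist_triangle _ _ _
      _ < δ + dist z c := by linarith
      _ ≤ R := by have := min_le_right (δ₀ / 2) (R - dist z c); linarith
  -- coordinate bounds
  have hre_le : ∀ w : ℂ, |w.re - z.re| ≤ dist w z := by
    intro w
    rw [Complex.dist_eq]
    simpa using Complex.abs_re_le_norm (w - z)
  have him_le : ∀ w : ℂ, |w.im - z.im| ≤ dist w z := by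
    intro w
    rw [Complex.dist_eq]
    simpa using Complex.abs_im_le_norm (w - z)
  -- the key identity
  have key : ∀ w ∈ ball z δ, F w - F z = A z.re w.re z.im + I * B w.re z.im w.im := by
    intro w hw
    have hwz : dist w z < δ := mem_ball.1 hw
    -- memberships
    have m1 : ∀ x ∈ uIcc c.re z.re, (x : ℂ) + c.im * I ∈ ball c R :=
      fun x hx => rect_mem_ball hz hx left_mem_uIcc
    have m2 : ∀ x ∈ uIcc z.re w.re, (x : ℂ) + c.im * I ∈ ball c R := by
      intro x hx
      exact hmem w hw x c.im c.im ((uIcc_abs_sub hx).trans (hre_le w)) (by simpa using dist_nonneg) left_mem_uIcc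
    have m3 : ∀ y ∈ uIcc c.im z.im, (z.re : ℂ) + y * I ∈ ball c R :=
      fun y hy => rect_mem_ball hz right_mem_uIcc hy
    have m4 : ∀ y ∈ uIcc c.im z.im, (w.re : ℂ) + y * I ∈ ball c R := by
      intro y hy
      exact hmem w hw w.re y y (hre_le w) (by simpa using dist_nonneg) hy
    have m5 : ∀ y ∈ uIcc z.im w.im, (w.re : ℂ) + y * I ∈ ball c R := by
      intro y hy
      exact hmem w hw w.re y z.im (hre_le w) ((uIcc_abs_sub hy).trans (him_le w)) right_mem_uIcc
    have m6 : ∀ x ∈ uIcc z.re w.re, ∀ y ∈ uIcc c.im z.im, (x : ℂ) + y * I ∈ ball c R := by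
      intro x hx y hy
      exact hmem w hw x y y ((uIcc_abs_sub hx).trans (hre_le w)) (by simpa using dist_nonneg) hy
    -- splits
    have split1 : A c.re w.re c.im = A c.re z.re c.im + A z.re w.re c.im :=
      (intervalIntegral.integral_add_adjacent_intervals (hIA _ _ _ m1) (hIA _ _ _ m2)).symm
    have split2 : B w.re c.im w.im = B w.re c.im z.im + B w.re z.im w.im :=
      (intervalIntegral.integral_add_adjacent_intervals (hIB _ _ _ m4) (hIB _ _ _ m5)).symm
    -- Goursat on the rectangle [z.re, w.re] × [c.im, z.im]
    set p : ℂ := (z.re : ℂ) + (c.im : ℂ) * I with hp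
    set q : ℂ := (w.re : ℂ) + (z.im : ℂ) * I with hq
    have hpre : p.re = z.re := by simp [hp]
    have hpim : p.im = c.im := by simp [hp]
    have hqre : q.re = w.re := by simp [hq]
    have hqim : q.im = z.im := by simp [hq]
    have hrect : DifferentiableOn ℂ f (uIcc p.re q.re ×ℂ uIcc p.im q.im) := by
      apply hf.mono
      rintro u ⟨hu1, hu2⟩
      rw [hpre, hqre] at hu1
      rw [hpim, hqim] at hu2
      have := m6 u.re hu1 u.im hu2
      rwa [Complex.re_add_im] at this
    have goursat := Complex.integral_boundary_rect_eq_zero_of_differentiableOn f p q hrect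
    rw [hpre, hpim, hqre, hqim] at goursat
    have goursat' : A z.re w.re c.im - A z.re w.re z.im + I * B w.re c.im z.im
        - I * B z.re c.im z.im = 0 := by
      simpa [hAdef, hBdef, smul_eq_mul] using goursat
    simp only [hFdef]
    linear_combination split1 + I * split2 + goursat'
  -- now the derivative
  rw [hasDerivAt_iff_isLittleO, Asymptotics.isLittleO_iff]
  intro ε hε
  have hfz : ContinuousAt f z := (hf.differentiableAt (isOpen_ball.mem_nhds hz)).continuousAt
  obtain ⟨η, hη, hηf⟩ := Metric.continuousAt_iff.1 hfz (ε / 2) (by linarith)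
  filter_upwards [Metric.ball_mem_nhds z (lt_min hδpos (half_pos hη))] with w hw
  have hwδ : w ∈ ball z δ := by
    rw [mem_ball] at hw ⊢
    exact hw.trans_le (min_le_left _ _)
  have hwη : dist w z < η / 2 := (mem_ball.1 hw).trans_le (min_le_right _ _)
  have hwz : dist w z < δ := mem_ball.1 hwδ
  -- integrabilities for integral_sub
  have m6' : ∀ x ∈ uIcc z.re w.re, (x : ℂ) + z.im * I ∈ ball c R := by
    intro x hx
    exact hmem w hwδ x z.im z.im ((uIcc_abs_sub hx).trans (hre_le w)) (by simpa using dist_nonneg) right_mem_uIcc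
  have m5' : ∀ y ∈ uIcc z.im w.im, (w.re : ℂ) + y * I ∈ ball c R := by
    intro y hy
    exact hmem w hwδ w.re y z.im (hre_le w) ((uIcc_abs_sub hy).trans (him_le w)) right_mem_uIcc
  -- pointwise bounds
  have hbA : ∀ x ∈ Set.uIoc z.re w.re, ‖f ((x : ℂ) + z.im * I) - f z‖ ≤ ε / 2 := by
    intro x hx
    have hx' : x ∈ uIcc z.re w.re := Set.Ioc_subset_Icc_self hx
    have : dist ((x : ℂ) + z.im * I) z < η := by
      have h1 : dist ((x : ℂ) + z.im * I) z = |x - z.re| := by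
        have h2 : ((x : ℂ) + z.im * I - z) = ((x - z.re : ℝ) : ℂ) := by
          rw [Complex.ext_iff]; constructor <;> simp
        rw [Complex.dist_eq, h2, Complex.norm_real, Real.norm_eq_abs]
      rw [h1]
      calc |x - z.re| ≤ |w.re - z.re| := uIcc_abs_sub hx'
        _ ≤ dist w z := hre_le w
        _ < η := by linarith
    have := hηf this
    rw [dist_eq_norm] at this
    linarith
  have hbB : ∀ y ∈ Set.uIoc z.im w.im, ‖f ((w.re : ℂ) + y * I) - f z‖ ≤ ε / 2 := by
    intro y hy
    have hy' : y ∈ uIcc z.im w.im := Set.Ioc_subset_Icc_self hy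
    have : dist ((w.re : ℂ) + y * I) z < η := by
      have h1 : dist ((w.re : ℂ) + y * I) z ≤ |w.re - z.re| + |y - z.im| := by
        rw [Complex.dist_eq]
        refine le_trans (Complex.norm_le_abs_re_add_abs_im _) (le_of_eq ?_)
        congr 1 <;> simp
      calc dist ((w.re : ℂ) + y * I) z ≤ |w.re - z.re| + |y - z.im| := h1
        _ ≤ dist w z + dist w z := add_le_add (hre_le w) ((uIcc_abs_sub hy').trans (him_le w))
        _ < η := by linarith
    have := hηf this
    rw [dist_eq_norm] at this
    linarith
  -- the difference as integrals of f - f z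
  have hsubA : A z.re w.re z.im - ((w.re - z.re : ℝ) : ℂ) * f z
      = ∫ x : ℝ in z.re..w.re, (f ((x : ℂ) + z.im * I) - f z) := by
    rw [intervalIntegral.integral_sub (hIA _ _ _ m6') intervalIntegrable_const,
      intervalIntegral.integral_const]
    simp [hAdef, Complex.real_smul]
  have hsubB : B w.re z.im w.im - ((w.im - z.im : ℝ) : ℂ) * f z
      = ∫ y : ℝ in z.im..w.im, (f ((w.re : ℂ) + y * I) - f z) := by
    rw [intervalIntegral.integral_sub (hIB _ _ _ m5') intervalIntegrable_const,
      intervalIntegral.integral_const]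
    simp [hBdef, Complex.real_smul]
  have hnA : ‖A z.re w.re z.im - ((w.re - z.re : ℝ) : ℂ) * f z‖ ≤ ε / 2 * |w.re - z.re| := by
    rw [hsubA]
    have := intervalIntegral.norm_integral_le_of_norm_le_const hbA
    linarith [this]
  have hnB : ‖B w.re z.im w.im - ((w.im - z.im : ℝ) : ℂ) * f z‖ ≤ ε / 2 * |w.im - z.im| := by
    rw [hsubB]
    have := intervalIntegral.norm_integral_le_of_norm_le_const hbB
    linarith [this]
  -- assemble
  have expand : F w - F z - (w - z) • f z
      = (A z.re w.re z.im - ((w.re - z.re : ℝ) : ℂ) * f z)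
        + I * (B w.re z.im w.im - ((w.im - z.im : ℝ) : ℂ) * f z) := by
    have hwzsplit : w - z = ((w.re - z.re : ℝ) : ℂ) + ((w.im - z.im : ℝ) : ℂ) * I := by
      rw [Complex.ext_iff]; constructor <;> simp
    rw [smul_eq_mul, key w hwδ, hwzsplit]
    ring
  rw [expand]
  calc ‖(A z.re w.re z.im - ((w.re - z.re : ℝ) : ℂ) * f z)
        + I * (B w.re z.im w.im - ((w.im - z.im : ℝ) : ℂ) * f z)‖
      ≤ ‖A z.re w.re z.im - ((w.re - z.re : ℝ) : ℂ) * f z‖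
        + ‖I * (B w.re z.im w.im - ((w.im - z.im : ℝ) : ℂ) * f z)‖ := norm_add_le _ _
    _ ≤ ε / 2 * |w.re - z.re| + ε / 2 * |w.im - z.im| := by
        rw [norm_mul, Complex.norm_I, one_mul]
        exact add_le_add hnA hnB
    _ ≤ ε / 2 * ‖w - z‖ + ε / 2 * ‖w - z‖ := by
        have h1 : |w.re - z.re| ≤ ‖w - z‖ := by
          rw [Complex.dist_eq] at *; simpa using Complex.abs_re_le_norm (w - z)
        have h2 : |w.im - z.im| ≤ ‖w - z‖ := by
          simpa using Complex.abs_im_le_norm (w - z)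
        have hε2 : (0:ℝ) ≤ ε / 2 := by linarith
        exact add_le_add (mul_le_mul_of_nonneg_left h1 hε2) (mul_le_mul_of_nonneg_left h2 hε2)
    _ = ε * ‖w - z‖ := by ring

lemma harmonic_global_rep {h : ℂ → ℝ} {c : ℂ} {R : ℝ} (hR : 0 < R)
    (hh : HarmonicOnSet h (ball c R)) :
    ∃ g : ℂ → ℂ, DifferentiableOn ℂ g (ball c R) ∧ ∀ z ∈ ball c R, h z = (g z).re := by
  choose! r hr hsub g hgd hgre using hh
  set fder : ℂ → ℂ := fun z => deriv (g z) z with hfder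
  -- the derivative of any local representative agrees with fder
  have hloc : ∀ z ∈ ball c R, ∀ w ∈ ball z (r z), fder w = deriv (g z) w := by
    intro z hz w hw
    have hwU : w ∈ ball c R := hsub z hz hw
    have hO : ball z (r z) ∩ ball w (r w) ∈ nhds w :=
      Filter.inter_mem (isOpen_ball.mem_nhds hw)
        (isOpen_ball.mem_nhds (mem_ball_self (hr w hwU)))
    have hdw : DifferentiableAt ℂ (g w) w :=
      (hgd w hwU).differentiableAt (isOpen_ball.mem_nhds (mem_ball_self (hr w hwU)))
    have hdz : DifferentiableAt ℂ (g z) w :=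
      (hgd z hz).differentiableAt (isOpen_ball.mem_nhds hw)
    have hq : DifferentiableAt ℂ (fun x => g w x - g z x) w := hdw.sub hdz
    have hre : (fun x => ((fun x => g w x - g z x) x).re) =ᶠ[nhds w] fun _ => (0 : ℝ) := by
      filter_upwards [hO] with x hx
      have e1 : h x = (g w x).re := hgre w hwU x hx.2
      have e2 : h x = (g z x).re := hgre z hz x hx.1
      simp [Complex.sub_re, ← e1, ← e2]
    have := deriv_eq_zero_of_re_eventually_zero hq hre
    have hsub' : deriv (fun x => g w x - g z x) w = deriv (g w) w - deriv (g z) w :=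
      deriv_sub hdw hdz
    rw [hsub'] at this
    have : deriv (g w) w = deriv (g z) w := sub_eq_zero.1 this
    simpa [hfder] using this
  -- fder is holomorphic on the ball
  have hfd : DifferentiableOn ℂ fder (ball c R) := by
    intro z hz
    have hda : AnalyticOnNhd ℂ (g z) (ball z (r z)) :=
      (hgd z hz).analyticOnNhd isOpen_ball
    have hder : DifferentiableAt ℂ (deriv (g z)) z :=
      ((hda.deriv z (mem_ball_self (hr z hz))).differentiableAt)
    have heq : fder =ᶠ[nhds z] deriv (g z) := by
      filter_upwards [isOpen_ball.mem_nhds (mem_ball_self (hr z hz))] with x hx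
      exact hloc z hz x hx
    exact ((heq.differentiableAt_iff).2 hder).differentiableWithinAt
  obtain ⟨F, hF⟩ := exists_primitive hfd
  -- (F x).re - h x is locally constant
  have hlc : ∀ z ∈ ball c R, ∀ x ∈ ball z (r z), (F x).re - h x = (F z).re - h z := by
    intro z hz x hx
    have hconst : F x - g z x = F z - g z z := by
      have hψd : DifferentiableOn ℂ (fun u => F u - g z u) (ball z (r z)) := by
        intro u hu
        exact ((hF u (hsub z hz hu)).differentiableAt.sub
          ((hgd z hz).differentiableAt (isOpen_ball.mem_nhds hu))).differentiableWithinAt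
      apply Convex.is_const_of_fderivWithin_eq_zero (convex_ball z (r z)) hψd _ hx
        (mem_ball_self (hr z hz))
      intro u hu
      have hFu : HasDerivAt F (fder u) u := hF u (hsub z hz hu)
      have hgu : HasDerivAt (g z) (deriv (g z) u) u :=
        ((hgd z hz).differentiableAt (isOpen_ball.mem_nhds hu)).hasDerivAt
      have hψ : HasDerivAt (fun u => F u - g z u) 0 u := by
        have := hFu.sub hgu
        rwa [hloc z hz u hu, sub_self] at this
      have h1 : fderivWithin ℂ (fun u => F u - g z u) (ball z (r z)) u
          = fderiv ℂ (fun u => F u - g z u) u := by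
        rw [fderivWithin_of_isOpen isOpen_ball hu]
      rw [h1, hψ.hasFDerivAt.fderiv]
      ext v
      simp
    have e1 : h x = (g z x).re := hgre z hz x hx
    have e2 : h z = (g z z).re := hgre z hz z (mem_ball_self (hr z hz))
    have := congrArg Complex.re hconst
    simp only [Complex.sub_re] at this
    rw [e1, e2]
    linarith
  set φ : ℂ → ℝ := fun x => (F x).re - h x with hφ
  have hcmem : c ∈ ball c R := mem_ball_self hR
  set u : Set ℂ := ⋃ (x : ℂ) (_ : x ∈ ball c R ∧ φ x = φ c), ball x (r x) with hu
  set v : Set ℂ := ⋃ (x : ℂ) (_ : x ∈ ball c R ∧ φ x ≠ φ c), ball x (r x) with hv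
  have huo : IsOpen u := isOpen_iUnion fun x => isOpen_iUnion fun _ => isOpen_ball
  have hvo : IsOpen v := isOpen_iUnion fun x => isOpen_iUnion fun _ => isOpen_ball
  have hcover : ball c R ⊆ u ∪ v := by
    intro x hx
    by_cases hxc : φ x = φ c
    · exact Or.inl (mem_iUnion₂.2 ⟨x, ⟨hx, hxc⟩, mem_ball_self (hr x hx)⟩)
    · exact Or.inr (mem_iUnion₂.2 ⟨x, ⟨hx, hxc⟩, mem_ball_self (hr x hx)⟩)
  have hdisj : Disjoint u v := by
    rw [Set.disjoint_iff_inter_eq_empty]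
    ext y
    simp only [Set.mem_inter_iff, Set.mem_empty_iff_false, iff_false, not_and]
    intro hyu hyv
    obtain ⟨x₁, ⟨hx₁, he₁⟩, hy₁⟩ := mem_iUnion₂.1 hyu
    obtain ⟨x₂, ⟨hx₂, he₂⟩, hy₂⟩ := mem_iUnion₂.1 hyv
    have f1 : φ y = φ x₁ := hlc x₁ hx₁ y hy₁
    have f2 : φ y = φ x₂ := hlc x₂ hx₂ y hy₂
    exact he₂ (by rw [← f2, f1, he₁])
  have hpc : IsPreconnected (ball c R) := (convex_ball c R).isPreconnected
  have hcu : (ball c R ∩ u).Nonempty :=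
    ⟨c, hcmem, mem_iUnion₂.2 ⟨c, ⟨hcmem, rfl⟩, mem_ball_self (hr c hcmem)⟩⟩
  have hsubu : ball c R ⊆ u :=
    hpc.subset_left_of_subset_union huo hvo hdisj hcover hcu
  have hconst : ∀ x ∈ ball c R, φ x = φ c := by
    intro x hx
    obtain ⟨x₀, ⟨hx₀, he₀⟩, hx'⟩ := mem_iUnion₂.1 (hsubu hx)
    simp only [hφ] at he₀ ⊢
    rw [hlc x₀ hx₀ x hx', he₀]
  refine ⟨fun x => F x - ((φ c : ℝ) : ℂ), ?_, ?_⟩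
  · intro x hx
    exact ((hF x hx).differentiableAt.sub_const _).differentiableWithinAt
  · intro x hx
    have := hconst x hx
    simp only [hφ] at this
    simp only [hφ, Complex.sub_re, Complex.ofReal_re]
    linarith


lemma harnack_step {g : ℂ → ℂ} {p : ℂ} {r : ℝ} (hr : 0 < r)
    (hd : DifferentiableOn ℂ g (ball p r)) (hpos : ∀ x ∈ ball p r, 0 ≤ (g x).re)
    {w : ℂ} (hw : dist w p ≤ r / 2) : (g w).re ≤ 3 * (g p).re := by
  have hp : p ∈ ball p r := mem_ball_self hr
  have hwball : w ∈ ball p r := mem_ball.2 (lt_of_le_of_lt hw (by linarith))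
  have main : ∀ ε > 0, (g w).re ≤ 3 * (g p).re + 3 * ε := by
    intro ε hε
    set a : ℝ := (g p).re + ε with ha
    have ha0 : 0 < a := add_pos_of_nonneg_of_pos (hpos p hp) hε
    set gε : ℂ → ℂ := fun x => g x - ((g p).im : ℂ) * I + (ε : ℂ) with hgε
    have hgεre : ∀ x, (gε x).re = (g x).re + ε := by
      intro x; simp [hgε]
    have hgεpos : ∀ x ∈ ball p r, 0 < (gε x).re := by
      intro x hx; rw [hgεre]; linarith [hpos x hx]
    have hgεp : gε p = (a : ℂ) := by
      rw [Complex.ext_iff]; constructor <;> simp [hgε, ha]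
    have hden : ∀ x ∈ ball p r, gε x + (a : ℂ) ≠ 0 := by
      intro x hx hc
      have h0 : (gε x + (a : ℂ)).re = 0 := by rw [hc]; simp
      rw [Complex.add_re, Complex.ofReal_re] at h0
      linarith [hgεpos x hx]
    have hgεd : DifferentiableOn ℂ gε (ball p r) :=
      (hd.sub_const _).add_const _
    set G : ℂ → ℂ := fun x => (gε x - (a : ℂ)) / (gε x + (a : ℂ)) with hG
    have hGd : DifferentiableOn ℂ G (ball p r) :=
      DifferentiableOn.div (hgεd.sub_const _) (hgεd.add_const _) hden
    have hGp : G p = 0 := by simp [hG, hgεp]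
    have hGlt : ∀ x ∈ ball p r, ‖G x‖ < 1 := by
      intro x hx
      rw [hG]
      simp only [norm_div]
      rw [div_lt_one (norm_pos_iff.2 (hden x hx))]
      have h2 : Complex.normSq (gε x - (a : ℂ)) < Complex.normSq (gε x + (a : ℂ)) := by
        have e1 := Complex.normSq_sub (gε x) ((a : ℂ))
        have e2 := Complex.normSq_add (gε x) ((a : ℂ))
        have e3 : ((gε x) * (starRingEnd ℂ) ((a : ℂ))).re = (gε x).re * a := by
          rw [Complex.conj_ofReal]
          simp [Complex.mul_re]
        nlinarith [hgεpos x hx]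
      rw [Complex.norm_def, Complex.norm_def]
      exact Real.sqrt_lt_sqrt (Complex.normSq_nonneg _) h2
    have hmaps : MapsTo G (ball p r) (ball (G p) 1) := by
      intro x hx
      rw [hGp, mem_ball, dist_zero_right]
      exact hGlt x hx
    have schwarz := Complex.dist_le_div_mul_dist_of_mapsTo_ball hGd (hmaps.mono_right ball_subset_closedBall) hwball
    have hGw : ‖G w‖ ≤ 1 / 2 := by
      rw [hGp, dist_zero_right] at schwarz
      calc ‖G w‖ ≤ 1 / r * dist w p := schwarz
        _ ≤ 1 / r * (r / 2) := mul_le_mul_of_nonneg_left hw (by positivity)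
        _ = 1 / 2 := by field_simp
    have hdw : gε w + (a : ℂ) ≠ 0 := hden w hwball
    have keyid : gε w * (1 - G w) = (a : ℂ) * (1 + G w) := by
      rw [hG]
      field_simp
      ring
    have habs : ‖gε w‖ * ‖1 - G w‖ = a * ‖1 + G w‖ := by
      have hc := congrArg norm keyid
      rwa [norm_mul, norm_mul, Complex.norm_real, Real.norm_eq_abs, _root_.abs_of_pos ha0] at hc
    have h1m : 1 / 2 ≤ ‖1 - G w‖ := by
      have h := norm_sub_norm_le (1 : ℂ) (G w)
      rw [norm_one] at h
      linarith
    have h1p : ‖1 + G w‖ ≤ 3 / 2 := by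
      have h := norm_add_le (1 : ℂ) (G w)
      rw [norm_one] at h
      linarith
    have hgwabs : ‖gε w‖ ≤ 3 * a := by
      nlinarith [norm_nonneg (gε w), norm_nonneg (1 - G w)]
    have hre := Complex.re_le_norm (gε w)
    rw [hgεre] at hre
    linarith
  refine le_of_forall_pos_le_add fun ε' hε' => ?_
  have := main (ε' / 3) (by linarith)
  linarith

lemma harnack_chain {z₀ z₁ : ℂ} (h₀ : z₀ ∈ ball (0 : ℂ) 1) (h₁ : z₁ ∈ ball (0 : ℂ) 1) :
    ∃ C : ℝ, 0 < C ∧ ∀ g : ℂ → ℂ, DifferentiableOn ℂ g (ball (0 : ℂ) 1) →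
      (∀ x ∈ ball (0 : ℂ) 1, 0 ≤ (g x).re) → (g z₁).re ≤ C * (g z₀).re := by
  set m : ℝ := max ‖z₀‖ ‖z₁‖ with hm
  have hm0 : 0 ≤ m := le_max_of_le_left (norm_nonneg _)
  have hm1 : m < 1 := by
    rw [hm]
    apply max_lt
    · simpa [Complex.dist_eq] using mem_ball.1 h₀
    · simpa [Complex.dist_eq] using mem_ball.1 h₁
  set δ : ℝ := (1 - m) / 2 with hδ
  have hδ0 : 0 < δ := by rw [hδ]; linarith
  obtain ⟨n, hn⟩ := exists_nat_gt (dist z₀ z₁ / δ)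
  have hn0 : 0 < n := by
    have h0 : (0 : ℝ) ≤ dist z₀ z₁ / δ := div_nonneg dist_nonneg hδ0.le
    exact_mod_cast h0.trans_lt hn
  have hnR : (0 : ℝ) < n := by exact_mod_cast hn0
  have hnc : (n : ℂ) ≠ 0 := by exact_mod_cast hn0.ne'
  refine ⟨3 ^ n, by positivity, ?_⟩
  intro g hgd hgpos
  set p : ℕ → ℂ := fun k => z₀ + ((k : ℂ) / (n : ℂ)) * (z₁ - z₀) with hp
  have habs : ∀ k : ℕ, k ≤ n → ‖p k‖ ≤ m := by
    intro k hk
    have hθ0 : (0 : ℝ) ≤ (k : ℝ) / n := by positivity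
    have hθ1 : (k : ℝ) / n ≤ 1 := by
      rw [div_le_one hnR]; exact_mod_cast hk
    have hrw : p k = ((1 - (k : ℝ) / n : ℝ) : ℂ) * z₀ + (((k : ℝ) / n : ℝ) : ℂ) * z₁ := by
      rw [hp]; push_cast; ring
    rw [hrw]
    have h1 := norm_add_le (((1 - (k : ℝ) / n : ℝ) : ℂ) * z₀)
      ((((k : ℝ) / n : ℝ) : ℂ) * z₁)
    rw [norm_mul, norm_mul, Complex.norm_real, Complex.norm_real, Real.norm_eq_abs, Real.norm_eq_abs,
      _root_.abs_of_nonneg (by linarith : (0:ℝ) ≤ 1 - (k : ℝ) / n),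
      _root_.abs_of_nonneg hθ0] at h1
    have hz₀m : ‖z₀‖ ≤ m := le_max_left _ _
    have hz₁m : ‖z₁‖ ≤ m := le_max_right _ _
    nlinarith
  have hball : ∀ k : ℕ, k ≤ n → ball (p k) (2 * δ) ⊆ ball (0 : ℂ) 1 := by
    intro k hk x hx
    rw [mem_ball, dist_zero_right]
    have h1 : ‖x - p k‖ < 2 * δ := by
      rw [← Complex.dist_eq]; exact mem_ball.1 hx
    have h2 := norm_add_le (x - p k) (p k)
    rw [sub_add_cancel] at h2
    have := habs k hk
    have : 2 * δ = 1 - m := by rw [hδ]; ring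
    linarith [habs k hk]
  have hstep : ∀ k : ℕ, k < n → (g (p (k + 1))).re ≤ 3 * (g (p k)).re := by
    intro k hk
    have hsub : ball (p k) (2 * δ) ⊆ ball (0 : ℂ) 1 := hball k hk.le
    apply harnack_step (by positivity : (0 : ℝ) < 2 * δ) (hgd.mono hsub)
      (fun x hx => hgpos x (hsub hx))
    have hdiff : p (k + 1) - p k = (1 / (n : ℂ)) * (z₁ - z₀) := by
      rw [hp]
      push_cast
      field_simp
      ring
    rw [Complex.dist_eq, hdiff, norm_mul, norm_div, norm_one]
    have hab : ‖((n : ℂ))‖ = (n : ℝ) := by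
      rw [Complex.norm_natCast]
    rw [hab]
    have hd01 : ‖z₁ - z₀‖ = dist z₀ z₁ := by
      rw [dist_comm, Complex.dist_eq]
    rw [hd01]
    have hlt : dist z₀ z₁ < n * δ := by
      rw [div_lt_iff₀ hδ0] at hn; linarith
    rw [div_mul_eq_mul_div, one_mul, div_le_iff₀ hnR]
    have : (n : ℝ) * δ = 2 * δ / 2 * n := by ring
    linarith
  have hind : ∀ k : ℕ, k ≤ n → (g (p k)).re ≤ 3 ^ k * (g (p 0)).re := by
    intro k
    induction k with
    | zero => intro _; simp
    | succ k ih =>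
      intro hk
      have h1 := hstep k (by omega)
      have h2 := ih (by omega)
      have h3 : (0 : ℝ) ≤ (g (p 0)).re :=
        hgpos _ (hball 0 (by omega) (mem_ball_self (by positivity)))
      calc (g (p (k + 1))).re ≤ 3 * (g (p k)).re := h1
        _ ≤ 3 * (3 ^ k * (g (p 0)).re) := by linarith
        _ = 3 ^ (k + 1) * (g (p 0)).re := by ring
  have hp0 : p 0 = z₀ := by simp [hp]
  have hpn : p n = z₁ := by
    rw [hp]
    simp only
    rw [div_self hnc]
    ring
  have := hind n le_rfl
  rwa [hp0, hpn] at this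


end Auxiliary

/-- **Lemma 8.1 (Lipschitz holonomy of a harmonic straightening).** For any `z₀, z₁ ∈ 𝔻`
there is a constant `C > 0` (a Harnack constant) such that for every monotone family
`Φ : 𝔻 × [0,1] → [0,1]` of harmonic functions normalized by `Φ(z₀,t) = t`, the holonomy
`t ↦ Φ(z₁,t)` is `C`-Lipschitz. -/
theorem harmonic_holonomy_lipschitz :
    ∀ z₀ ∈ unitDisc, ∀ z₁ ∈ unitDisc, ∃ C : ℝ, 0 < C ∧
      ∀ Φ : ℂ → ℝ → ℝ,
        (∀ t ∈ Icc (0 : ℝ) 1, ∀ z ∈ unitDisc, Φ z t ∈ Icc (0 : ℝ) 1) →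
        (∀ t ∈ Icc (0 : ℝ) 1, HarmonicOnSet (fun z => Φ z t) unitDisc) →
        (∀ s ∈ Icc (0 : ℝ) 1, ∀ t ∈ Icc (0 : ℝ) 1, s ≤ t →
          ∀ z ∈ unitDisc, Φ z s ≤ Φ z t) →
        (∀ t ∈ Icc (0 : ℝ) 1, Φ z₀ t = t) →
        ∀ s ∈ Icc (0 : ℝ) 1, ∀ t ∈ Icc (0 : ℝ) 1, |Φ z₁ t - Φ z₁ s| ≤ C * |t - s| := by
  intro z₀ hz₀ z₁ hz₁
  have hz₀' : z₀ ∈ ball (0 : ℂ) 1 := hz₀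
  have hz₁' : z₁ ∈ ball (0 : ℂ) 1 := hz₁
  obtain ⟨C, hC, hCh⟩ := harnack_chain hz₀' hz₁'
  refine ⟨C, hC, ?_⟩
  intro Φ hrange hharm hmono hnorm
  have key : ∀ s ∈ Icc (0:ℝ) 1, ∀ t ∈ Icc (0:ℝ) 1, s ≤ t →
      Φ z₁ t - Φ z₁ s ≤ C * (t - s) := by
    intro s hs t ht hst
    have hh : HarmonicOnSet (fun z => Φ z t - Φ z s) unitDisc := by
      intro z hz
      obtain ⟨r₁, hr₁, hsub₁, g₁, hg₁d, hg₁re⟩ := hharm t ht z hz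
      obtain ⟨r₂, hr₂, hsub₂, g₂, hg₂d, hg₂re⟩ := hharm s hs z hz
      refine ⟨min r₁ r₂, lt_min hr₁ hr₂, (ball_subset_ball (min_le_left _ _)).trans hsub₁,
        fun x => g₁ x - g₂ x, ?_, ?_⟩
      · exact (hg₁d.mono (ball_subset_ball (min_le_left _ _))).sub
          (hg₂d.mono (ball_subset_ball (min_le_right _ _)))
      · intro w hw
        rw [Complex.sub_re, ← hg₁re w (ball_subset_ball (min_le_left _ _) hw),
          ← hg₂re w (ball_subset_ball (min_le_right _ _) hw)]
    have hh' : HarmonicOnSet (fun z => Φ z t - Φ z s) (ball (0 : ℂ) 1) := hh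
    obtain ⟨g, hgd, hgre⟩ := harmonic_global_rep one_pos hh'
    have hgpos : ∀ x ∈ ball (0 : ℂ) 1, 0 ≤ (g x).re := by
      intro x hx
      rw [← hgre x hx]
      exact sub_nonneg.2 (hmono s hs t ht hst x hx)
    have hmain := hCh g hgd hgpos
    rw [← hgre z₁ hz₁', ← hgre z₀ hz₀'] at hmain
    rwa [hnorm t ht, hnorm s hs] at hmain
  intro s hs t ht
  rcases le_total s t with hst | hst
  · rw [abs_of_nonneg (sub_nonneg.2 (hmono s hs t ht hst z₁ hz₁)),
      abs_of_nonneg (sub_nonneg.2 hst)]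
    exact key s hs t ht hst
  · rw [abs_of_nonpos (sub_nonpos.2 (hmono t ht s hs hst z₁ hz₁)),
      abs_of_nonpos (sub_nonpos.2 hst)]
    have h1 := key t ht s hs hst
    have h2 : C * -(t - s) = C * (s - t) := by ring
    rw [h2]
    linarith
end
end
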